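/- The Mellin–Fejér kernel with c = 0, ρ = 1, F(x) := (1/(2π)) sinc²(log(√x)/π) (where sinc(u) = sin(πu)/(πu)), satisfies the partition of unity property ∑_{k∈ℤ} F(e^k x) = 1 for all x > 0. -/

import Mathlib

open Real

/-- `sinc u = sin(πu)/(πu)`, `sinc 0 = 1`. -/
noncomputable def sinc (u : ℝ) : ℝ :=
  if u = 0 then 1 else Real.sin (π * u) / (π * u)

/-- The Mellin–Fejér kernel with `c = 0`, `ρ = 1`:
`F(x) = (1/(2π)) sinc²((1/π) log √x)`. -/
noncomputable def mellinFejer01 (x : ℝ) : ℝ :=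
  1 / (2 * π) * _root_.sinc (Real.log (Real.sqrt x) / π) ^ 2

section Aux

open MeasureTheory Filter Asymptotics FourierTransform Complex Topology

/-- The Fejér function on the real line. -/
noncomputable def fejerG (u : ℝ) : ℝ := 1 / (2 * π) * _root_.sinc (u / (2 * π)) ^ 2

/-- Complex-valued Fejér function. -/
noncomputable def fejerGc : ℝ → ℂ := fun u => ((fejerG u : ℝ) : ℂ)

/-- The triangle function, Fourier transform of the Fejér function. -/
noncomputable def triFn : ℝ → ℂ := fun ξ => ((max 0 (1 - 2 * π * |ξ|) : ℝ) : ℂ)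

lemma sinc_of_ne {u : ℝ} (h : u ≠ 0) : _root_.sinc u = Real.sin (π * u) / (π * u) := if_neg h

lemma continuous_sinc : Continuous _root_.sinc := by
  rw [continuous_iff_continuousAt]
  intro x
  rcases eq_or_ne x 0 with rfl | hx
  · have hd : HasDerivAt (fun u : ℝ => Real.sin (π * u)) π 0 := by
      have h1 : HasDerivAt (fun u : ℝ => π * u) π 0 := by
        simpa using (hasDerivAt_id (0:ℝ)).const_mul π
      have h2 := (Real.hasDerivAt_sin (π * 0)).comp 0 h1
      simpa [Function.comp_def] using h2
    have hslope := hasDerivAt_iff_tendsto_slope.mp hd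
    have h3 : Tendsto _root_.sinc (𝓝[≠] (0:ℝ)) (𝓝 1) := by
      have h4 : Tendsto (fun u : ℝ => π⁻¹ * slope (fun u : ℝ => Real.sin (π * u)) 0 u)
          (𝓝[≠] (0:ℝ)) (𝓝 (π⁻¹ * π)) := hslope.const_mul π⁻¹
      rw [inv_mul_cancel₀ Real.pi_ne_zero] at h4
      apply h4.congr'
      filter_upwards [self_mem_nhdsWithin] with u hu
      have hu' : u ≠ 0 := hu
      rw [slope_def_field, sinc_of_ne hu']
      field_simp
      simp [mul_comm]
    have h0 : _root_.sinc 0 = 1 := if_pos rfl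
    rw [ContinuousAt, h0]
    rw [← nhdsNE_sup_pure 0]
    rw [tendsto_sup]
    exact ⟨h3, by rw [tendsto_pure_left]; intro s hs; simpa [h0] using mem_of_mem_nhds hs⟩
  · have hcont : ContinuousAt (fun u : ℝ => Real.sin (π * u) / (π * u)) x := by
      apply ContinuousAt.div
      · fun_prop
      · fun_prop
      · exact mul_ne_zero Real.pi_ne_zero hx
    apply hcont.congr
    filter_upwards [eventually_ne_nhds hx] with u hu
    exact (sinc_of_ne hu).symm

lemma continuous_fejerG : Continuous fejerG := by
  unfold fejerG
  exact continuous_const.mul ((_root_.continuous_sinc.comp (continuous_id.div_const _)).pow 2)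

lemma continuous_fejerGc : Continuous fejerGc :=
  Complex.continuous_ofReal.comp continuous_fejerG

lemma sinc_sq_le_one (u : ℝ) : _root_.sinc u ^ 2 ≤ 1 := by
  rcases eq_or_ne u 0 with rfl | hu
  · simp [_root_.sinc]
  · rw [sinc_of_ne hu, div_pow]
    rw [div_le_one (by positivity)]
    exact Real.sin_sq_le_sq

lemma fejerG_nonneg (u : ℝ) : 0 ≤ fejerG u := by
  unfold fejerG; positivity

lemma fejerG_le (u : ℝ) : fejerG u ≤ 1 / (2 * π) := by
  have hπ := Real.pi_pos
  have h := sinc_sq_le_one (u / (2 * π))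
  have h2 : (0:ℝ) ≤ 1 / (2 * π) := by positivity
  calc fejerG u ≤ 1 / (2 * π) * 1 := mul_le_mul_of_nonneg_left h h2
  _ = 1 / (2 * π) := mul_one _

lemma fejerG_eq {u : ℝ} (hu : u ≠ 0) :
    fejerG u = (1 - Real.cos u) / (π * u ^ 2) := by
  have hπ := Real.pi_pos
  unfold fejerG
  have hu2 : u / (2*π) ≠ 0 := by positivity
  rw [sinc_of_ne hu2]
  have harg : π * (u / (2*π)) = u / 2 := by field_simp
  rw [harg]
  have hs : Real.sin (u/2) ^ 2 = 1/2 - Real.cos u / 2 := by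
    have := Real.sin_sq_eq_half_sub (u/2)
    rwa [show 2 * (u/2) = u by ring] at this
  rw [div_pow, hs]
  field_simp

lemma fejerG_sq_le (u : ℝ) : u ^ 2 * fejerG u ≤ 2 / π := by
  have hπ := Real.pi_pos
  rcases eq_or_ne u 0 with rfl | hu
  · norm_num; positivity
  · rw [fejerG_eq hu]
    have h1 : -1 ≤ Real.cos u := Real.neg_one_le_cos u
    have h2 : (0:ℝ) < u ^ 2 := by positivity
    have h3 : u ^ 2 * ((1 - Real.cos u) / (π * u ^ 2)) = (1 - Real.cos u) / π := by
      field_simp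
    rw [h3, div_le_div_iff_of_pos_right hπ]
    linarith

lemma integrable_fejerGc : Integrable fejerGc := by
  have h : Integrable fejerG := by
    have hπ := Real.pi_pos
    apply Integrable.mono' (integrable_inv_one_add_sq.const_mul (4/π))
      continuous_fejerG.aestronglyMeasurable
    filter_upwards with u
    rw [Real.norm_eq_abs, _root_.abs_of_nonneg (fejerG_nonneg u)]
    have h1 := fejerG_le u
    have h2 := fejerG_sq_le u
    have h3 : (0:ℝ) < 1 + u ^ 2 := by positivity
    have h1' : fejerG u * π ≤ 1/2 := by
      rw [show (1:ℝ)/(2*π) = (1/2)/π by ring] at h1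
      exact (le_div_iff₀ hπ).mp h1
    have h2' : u ^ 2 * fejerG u * π ≤ 2 := (le_div_iff₀ hπ).mp h2
    have key : fejerG u * (1 + u ^ 2) ≤ 4 / π := by
      rw [le_div_iff₀ hπ]
      nlinarith
    calc fejerG u = fejerG u * (1 + u^2) * (1 + u^2)⁻¹ := by field_simp
    _ ≤ 4 / π * (1 + u^2)⁻¹ := by
        apply mul_le_mul_of_nonneg_right key (by positivity)
  exact h.ofReal

lemma triFn_eq_zero {xi : ℝ} (h : 1/(2*π) ≤ |xi|) : triFn xi = 0 := by
  have hπ := Real.pi_pos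
  have h1 : 1 ≤ 2*π*|xi| := by
    rw [div_le_iff₀ (by positivity)] at h
    linarith
  unfold triFn
  rw [max_eq_left (by linarith)]
  simp

lemma continuous_triFn : Continuous triFn := by
  apply Complex.continuous_ofReal.comp
  exact continuous_const.max (by fun_prop)

lemma integrable_triFn : MeasureTheory.Integrable triFn := by
  apply Continuous.integrable_of_hasCompactSupport continuous_triFn
  apply HasCompactSupport.intro (isCompact_Icc (a := -(1/(2*π))) (b := 1/(2*π)))
  intro ξ hξ
  apply triFn_eq_zero
  simp only [Set.mem_Icc, not_and_or, not_le] at hξ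
  rcases hξ with h | h
  · exact le_abs.mpr (Or.inr (by linarith))
  · exact le_abs.mpr (Or.inl (by linarith))

set_option maxHeartbeats 2000000 in
lemma fourier_triFn (x : ℝ) : (𝓕 triFn) x = fejerGc x := by
  have hπ := Real.pi_pos
  have hπc : (π:ℂ) ≠ 0 := by exact_mod_cast Real.pi_ne_zero
  set r : ℝ := 1/(2*π) with hrdef
  have hr : 0 < r := by positivity
  set c : ℂ := ((-2*π*x : ℝ) : ℂ) * Complex.I with hcdef
  clear_value r c
  have hderiv : ∀ v : ℝ, HasDerivAt (fun v : ℝ => (v:ℂ)) 1 v := by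
    intro v
    simpa using (hasDerivAt_id v).ofReal_comp
  have step1 : (𝓕 triFn) x
      = (∫ v in (-r)..0, ((1 + 2*π*v : ℝ) : ℂ) * Complex.exp (c * (v:ℝ)))
      + ∫ v in (0:ℝ)..r, ((1 - 2*π*v : ℝ) : ℂ) * Complex.exp (c * (v:ℝ)) := by
    rw [Real.fourier_real_eq_integral_exp_smul]
    have hzero : ∀ v : ℝ, v ∉ Set.Ioc (-r) r →
        Complex.exp (↑(-2 * π * v * x) * Complex.I) • triFn v = 0 := by
      intro v hv
      have h0 : triFn v = 0 := by
        apply triFn_eq_zero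
        simp only [Set.mem_Ioc, not_and_or, not_lt, not_le] at hv
        rcases hv with h | h
        · exact le_abs.mpr (Or.inr (by linarith))
        · exact le_abs.mpr (Or.inl (by linarith))
      rw [h0, smul_zero]
    rw [← MeasureTheory.setIntegral_eq_integral_of_forall_compl_eq_zero hzero]
    rw [← intervalIntegral.integral_of_le (by linarith : -r ≤ r)]
    have hcont : Continuous fun v : ℝ => Complex.exp (↑(-2 * π * v * x) * Complex.I) • triFn v := by
      have := continuous_triFn
      fun_prop
    rw [← intervalIntegral.integral_add_adjacent_intervals (a := -r) (b := 0) (c := r)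
      (hcont.intervalIntegrable _ _) (hcont.intervalIntegrable _ _)]
    congr 1
    · apply intervalIntegral.integral_congr
      intro v hv
      rw [Set.uIcc_of_le (by linarith : -r ≤ (0:ℝ)), Set.mem_Icc] at hv
      have habs : |v| = -v := abs_of_nonpos hv.2
      have hge : (0:ℝ) ≤ 1 + 2*π*v := by
        have h2 : 2*π*(-r) ≤ 2*π*v := by nlinarith [hv.1]
        have h3 : 2*π*(-r) = -1 := by rw [hrdef]; field_simp
        linarith
      have htri : triFn v = ((1 + 2*π*v : ℝ) : ℂ) := by
        unfold triFn
        rw [habs, max_eq_right (by linarith)]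
        push_cast
        ring
      show Complex.exp (↑(-2 * π * v * x) * Complex.I) • triFn v = ((1 + 2*π*v : ℝ) : ℂ) * Complex.exp (c * (v:ℝ))
      rw [htri, smul_eq_mul, mul_comm]
      congr 2
      rw [hcdef]
      push_cast
      ring
    · apply intervalIntegral.integral_congr
      intro v hv
      rw [Set.uIcc_of_le (by linarith : (0:ℝ) ≤ r), Set.mem_Icc] at hv
      have habs : |v| = v := abs_of_nonneg hv.1
      have hge : (0:ℝ) ≤ 1 - 2*π*v := by
        have h2 : 2*π*v ≤ 2*π*r := by nlinarith [hv.2]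
        have h3 : 2*π*r = 1 := by rw [hrdef]; field_simp
        linarith
      have htri : triFn v = ((1 - 2*π*v : ℝ) : ℂ) := by
        unfold triFn
        rw [habs, max_eq_right (by linarith)]
      show Complex.exp (↑(-2 * π * v * x) * Complex.I) • triFn v = ((1 - 2*π*v : ℝ) : ℂ) * Complex.exp (c * (v:ℝ))
      rw [htri, smul_eq_mul, mul_comm]
      congr 2
      rw [hcdef]
      push_cast
      ring
  rw [step1]
  rcases eq_or_ne x 0 with rfl | hx
  · have hc0 : c = 0 := by rw [hcdef]; push_cast; ring
    have hint1 : (∫ v in (-r)..0, ((1 + 2*π*v : ℝ) : ℂ) * Complex.exp (c * (v:ℝ)))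
        = ((r : ℂ) - π * r^2) := by
      have hF : ∀ v : ℝ, HasDerivAt (fun v : ℝ => ((v:ℂ) + π * ((v:ℂ)*(v:ℂ))))
          (((1 + 2*π*v : ℝ) : ℂ) * Complex.exp (c * (v:ℝ))) v := by
        intro v
        have hsq : HasDerivAt (fun v : ℝ => ((v:ℂ)*(v:ℂ))) (2*(v:ℂ)) v := by
          have h0 := (hderiv v).mul (hderiv v)
          exact h0.congr_deriv (by ring)
        have h1 := (hderiv v).add (hsq.const_mul (π:ℂ))
        refine h1.congr_deriv ?_
        rw [hc0]
        push_cast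
        simp only [zero_mul, Complex.exp_zero, mul_one]
        ring
      rw [intervalIntegral.integral_eq_sub_of_hasDerivAt (fun v _ => hF v)
        (Continuous.intervalIntegrable (by continuity) _ _)]
      push_cast
      ring
    have hint2 : (∫ v in (0:ℝ)..r, ((1 - 2*π*v : ℝ) : ℂ) * Complex.exp (c * (v:ℝ)))
        = ((r : ℂ) - π * r^2) := by
      have hF : ∀ v : ℝ, HasDerivAt (fun v : ℝ => ((v:ℂ) - π * ((v:ℂ)*(v:ℂ))))
          (((1 - 2*π*v : ℝ) : ℂ) * Complex.exp (c * (v:ℝ))) v := by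
        intro v
        have hsq : HasDerivAt (fun v : ℝ => ((v:ℂ)*(v:ℂ))) (2*(v:ℂ)) v := by
          have h0 := (hderiv v).mul (hderiv v)
          exact h0.congr_deriv (by ring)
        have h1 := (hderiv v).sub (hsq.const_mul (π:ℂ))
        refine h1.congr_deriv ?_
        rw [hc0]
        push_cast
        simp only [zero_mul, Complex.exp_zero, mul_one]
        ring
      rw [intervalIntegral.integral_eq_sub_of_hasDerivAt (fun v _ => hF v)
        (Continuous.intervalIntegrable (by continuity) _ _)]
      push_cast
      ring
    rw [hint1, hint2]
    have hG0 : fejerG 0 = 1/(2*π) := by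
      unfold fejerG
      norm_num [_root_.sinc]
    unfold fejerGc
    rw [hG0, hrdef]
    push_cast
    field_simp
    ring
  · have hxc : (x:ℂ) ≠ 0 := by exact_mod_cast hx
    have hc : c ≠ 0 := by
      rw [hcdef]
      apply mul_ne_zero _ Complex.I_ne_zero
      rw [Complex.ofReal_ne_zero]
      have := Real.pi_ne_zero
      positivity
    have hcsq : c^2 = -((4:ℂ)*π^2*x^2) := by
      rw [hcdef, mul_pow, Complex.I_sq]
      push_cast
      ring
    have hint1 : (∫ v in (-r)..0, ((1 + 2*π*v : ℝ) : ℂ) * Complex.exp (c * (v:ℝ)))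
        = ((1 + 2*π*((0:ℝ):ℂ))/c - 2*π/c^2) * Complex.exp (c*((0:ℝ):ℂ))
          - ((1 + 2*π*((-r:ℝ):ℂ))/c - 2*π/c^2) * Complex.exp (c*((-r:ℝ):ℂ)) := by
      have hF : ∀ v : ℝ, HasDerivAt
          (fun v : ℝ => ((1 + 2*π*((v:ℝ):ℂ))/c - 2*π/c^2) * Complex.exp (c*((v:ℝ):ℂ)))
          (((1 + 2*π*v : ℝ) : ℂ) * Complex.exp (c * (v:ℝ))) v := by
        intro v
        have h1 : HasDerivAt (fun v : ℝ => (1 + 2*π*((v:ℝ):ℂ))/c - 2*π/c^2) (2*π/c) v := by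
          simpa using ((((hderiv v).const_mul ((2:ℂ)*π)).const_add 1).div_const c).sub_const (2*π/c^2)
        have h2 : HasDerivAt (fun v : ℝ => Complex.exp (c*((v:ℝ):ℂ))) (Complex.exp (c*((v:ℝ):ℂ)) * c) v := by
          simpa using ((hderiv v).const_mul c).cexp
        have h3 := h1.mul h2
        refine h3.congr_deriv ?_
        push_cast
        field_simp
        ring
      rw [intervalIntegral.integral_eq_sub_of_hasDerivAt (fun v _ => hF v)
        (Continuous.intervalIntegrable (by continuity) _ _)]
    have hint2 : (∫ v in (0:ℝ)..r, ((1 - 2*π*v : ℝ) : ℂ) * Complex.exp (c * (v:ℝ)))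
        = ((1 - 2*π*((r:ℝ):ℂ))/c + 2*π/c^2) * Complex.exp (c*((r:ℝ):ℂ))
          - ((1 - 2*π*((0:ℝ):ℂ))/c + 2*π/c^2) * Complex.exp (c*((0:ℝ):ℂ)) := by
      have hF : ∀ v : ℝ, HasDerivAt
          (fun v : ℝ => ((1 - 2*π*((v:ℝ):ℂ))/c + 2*π/c^2) * Complex.exp (c*((v:ℝ):ℂ)))
          (((1 - 2*π*v : ℝ) : ℂ) * Complex.exp (c * (v:ℝ))) v := by
        intro v
        have h1 : HasDerivAt (fun v : ℝ => (1 - 2*π*((v:ℝ):ℂ))/c + 2*π/c^2) (-(2*π)/c) v := by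
          simpa using ((((hderiv v).const_mul ((2:ℂ)*π)).const_sub 1).div_const c).add_const (2*π/c^2)
        have h2 : HasDerivAt (fun v : ℝ => Complex.exp (c*((v:ℝ):ℂ))) (Complex.exp (c*((v:ℝ):ℂ)) * c) v := by
          simpa using ((hderiv v).const_mul c).cexp
        have h3 := h1.mul h2
        refine h3.congr_deriv ?_
        push_cast
        field_simp
        ring
      rw [intervalIntegral.integral_eq_sub_of_hasDerivAt (fun v _ => hF v)
        (Continuous.intervalIntegrable (by continuity) _ _)]
    rw [hint1, hint2]
    have e0 : Complex.exp (c*((0:ℝ):ℂ)) = 1 := by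
      rw [Complex.ofReal_zero, mul_zero, Complex.exp_zero]
    have e1 : Complex.exp (c * ((-r:ℝ):ℂ)) = Complex.cos x + Complex.sin x * Complex.I := by
      have harg : c * ((-r:ℝ):ℂ) = (x:ℂ) * Complex.I := by
        rw [hcdef, hrdef]
        push_cast
        field_simp
      rw [harg, Complex.exp_mul_I]
    have e2 : Complex.exp (c * ((r:ℝ):ℂ)) = Complex.cos x - Complex.sin x * Complex.I := by
      have harg : c * ((r:ℝ):ℂ) = ((-x:ℝ):ℂ) * Complex.I := by
        rw [hcdef, hrdef]
        push_cast
        field_simp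
      rw [harg, Complex.exp_mul_I, Complex.ofReal_neg, Complex.cos_neg, Complex.sin_neg]
      ring
    have k0 : (2:ℂ)*π*((0:ℝ):ℂ) = 0 := by push_cast; ring
    have km : (1:ℂ) + 2*π*((-r:ℝ):ℂ) = 0 := by
      rw [hrdef]; push_cast; field_simp; norm_num
    have kp : (1:ℂ) - 2*π*((r:ℝ):ℂ) = 0 := by
      rw [hrdef]; push_cast; field_simp; norm_num
    rw [e0, e1, e2, k0, km, kp]
    simp only [add_zero, zero_div, zero_sub, zero_add, mul_one, sub_zero]
    unfold fejerGc
    rw [fejerG_eq hx]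
    trans (4*(π:ℂ)*(Complex.cos ↑x - 1)/c^2)
    · have hcc : c^10 * c⁻¹^10 = 1 := by
        rw [← mul_pow, mul_inv_cancel₀ hc, one_pow]
      field_simp
      linear_combination
    · rw [hcsq]
      push_cast
      rw [div_eq_div_iff (by simp [hπc, hxc]) (by simp [hπc, hxc])]
      ring

lemma fourier_fejerGc (ξ : ℝ) : (𝓕 fejerGc) ξ = triFn ξ := by
  have h : 𝓕 triFn = fejerGc := funext fourier_triFn
  have hinv : 𝓕⁻ (𝓕 triFn) = triFn :=
    continuous_triFn.fourierInv_fourier_eq integrable_triFn (by rw [h]; exact integrable_fejerGc)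
  have h2 : (𝓕 fejerGc) ξ = (𝓕⁻ (𝓕 triFn)) (-ξ) := by
    rw [h, Real.fourierInv_eq_fourier_neg, neg_neg]
  rw [h2, hinv]
  unfold triFn
  rw [abs_neg]

lemma eventually_cocompact_one_le_abs : ∀ᶠ u : ℝ in Filter.cocompact ℝ, 1 ≤ |u| := by
  rw [cocompact_eq_atBot_atTop, Filter.eventually_sup]
  constructor
  · filter_upwards [Filter.eventually_le_atBot (-1:ℝ)] with u hu
    rw [le_abs]; right; linarith
  · filter_upwards [Filter.eventually_ge_atTop (1:ℝ)] with u hu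
    exact le_abs.mpr (Or.inl hu)

lemma isBigO_fejerGc : fejerGc =O[Filter.cocompact ℝ] (fun u : ℝ => |u| ^ (-(3/2) : ℝ)) := by
  rw [Asymptotics.isBigO_iff]
  refine ⟨2/π, ?_⟩
  filter_upwards [eventually_cocompact_one_le_abs] with u hu
  have hπ := Real.pi_pos
  have hu0 : (0:ℝ) < |u| := by linarith
  have h1 : ‖fejerGc u‖ = fejerG u := by
    unfold fejerGc
    rw [Complex.norm_real, Real.norm_eq_abs, _root_.abs_of_nonneg (fejerG_nonneg u)]
  have h2 : fejerG u ≤ 2/π * |u| ^ (-(2:ℝ)) := by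
    have hsq := fejerG_sq_le u
    have hrw : |u| ^ (-(2:ℝ)) = (u^2)⁻¹ := by
      rw [Real.rpow_neg (abs_nonneg u), show ((2:ℝ) = ((2:ℕ):ℝ)) by norm_num,
        Real.rpow_natCast, _root_.sq_abs]
    have hu2 : (0:ℝ) < u^2 := _root_.sq_abs u ▸ pow_pos hu0 2
    rw [hrw, ← div_eq_mul_inv, le_div_iff₀ hu2]
    nlinarith
  have h3 : |u| ^ (-(2:ℝ)) ≤ |u| ^ (-(3/2) : ℝ) :=
    Real.rpow_le_rpow_of_exponent_le hu (by norm_num)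
  rw [h1, Real.norm_eq_abs (|u| ^ _), _root_.abs_of_nonneg (Real.rpow_nonneg (abs_nonneg u) _)]
  calc fejerG u ≤ 2/π * |u|^(-(2:ℝ)) := h2
  _ ≤ 2/π * |u|^(-(3/2):ℝ) := mul_le_mul_of_nonneg_left h3 (by positivity)

lemma isBigO_fourier_fejerGc :
    (𝓕 fejerGc) =O[Filter.cocompact ℝ] (fun u : ℝ => |u| ^ (-(3/2) : ℝ)) := by
  rw [Asymptotics.isBigO_iff]
  refine ⟨1, ?_⟩
  filter_upwards [eventually_cocompact_one_le_abs] with u hu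
  have hπ := Real.pi_pos
  rw [fourier_fejerGc, triFn_eq_zero ?_]
  · rw [norm_zero]
    positivity
  · have h1 : 1/(2*π) ≤ 1 := by
      rw [div_le_one (by positivity)]
      linarith [Real.pi_gt_three]
    linarith

lemma fejer_poisson (t : ℝ) : ∑' k : ℤ, fejerGc (t + k) = 1 := by
  rw [Real.tsum_eq_tsum_fourier_of_rpow_decay continuous_fejerGc
    (by norm_num : (1:ℝ) < 3/2) isBigO_fejerGc isBigO_fourier_fejerGc t]
  rw [tsum_eq_single (0 : ℤ) ?_]
  · rw [Int.cast_zero, fourier_fejerGc]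
    unfold triFn
    norm_num
  · intro n hn
    have h1 : (1:ℝ) ≤ |(n:ℝ)| := by
      have := Int.one_le_abs hn
      exact_mod_cast this
    have hπ := Real.pi_pos
    have h2 : 1/(2*π) ≤ |(n:ℝ)| := by
      have : 1/(2*π) ≤ 1 := by
        rw [div_le_one (by positivity)]
        linarith [Real.pi_gt_three]
      linarith
    rw [fourier_fejerGc, triFn_eq_zero h2, zero_mul]

end Aux
/-- Partition of unity for the Mellin–Fejér kernel. -/
theorem mellinFejer01_partition_of_unity (x : ℝ) (hx : 0 < x) :
    ∑' k : ℤ, mellinFejer01 (Real.exp k * x) = 1 := by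
  have key : ∀ k : ℤ, mellinFejer01 (Real.exp k * x) = fejerG (Real.log x + k) := by
    intro k
    unfold mellinFejer01 fejerG
    have harg : Real.log (Real.sqrt (Real.exp k * x)) / π = (Real.log x + k) / (2 * π) := by
      rw [Real.log_sqrt (by positivity), Real.log_mul (Real.exp_ne_zero _) (ne_of_gt hx),
        Real.log_exp]
      have hπ := Real.pi_ne_zero
      field_simp
      ring
    rw [harg]
  have hC := fejer_poisson (Real.log x)
  have hs : Summable fun k : ℤ => fejerGc (Real.log x + k) := by
    by_contra hcon
    rw [tsum_eq_zero_of_not_summable hcon] at hC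
    norm_num at hC
  have hs' : Summable fun k : ℤ => fejerG (Real.log x + k) := by
    rw [← Complex.summable_ofReal]
    exact hs
  have hofr : ((∑' k : ℤ, fejerG (Real.log x + k) : ℝ) : ℂ) = 1 := by
    rw [Complex.ofReal_tsum]
    exact hC
  have h2 : ∑' k : ℤ, fejerG (Real.log x + k) = 1 := by exact_mod_cast hofr
  calc ∑' k : ℤ, mellinFejer01 (Real.exp k * x) = ∑' k : ℤ, fejerG (Real.log x + k) :=
        tsum_congr fun k => key k
  _ = 1 := h2
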